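/- Let S be a smooth projective rational surface with a conic bundle π: S → P¹ having k singular fibers, and let G be a group of automorphisms of S preserving π, acting trivially on the base, with |G| ∈ {2,4}, and such that the G-invariant part of Pic(S) has rank 2 (hence equals Z·K_S ⊕ Z·f where f is the class of a fiber). If there exists a G-orbit of l pairwise disjoint (−1)-curves with l ∈ {1,2,4}, then k ∈ {2,3,5}. In particular, if k = 4 or k ≥ 6, the pair (G,S) is minimal. -/

import Mathlib

open Finset

/-- A witness of non-minimality of the pair `(G, S)`: a `G`-orbit of `l`
pairwise disjoint `(-1)`-curves on the conic bundle (`l ∈ {1,2,4}`), i.e.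
classes `C₁, …, C_l` in `Pic(S)` permuted transitively by `G`, with
`Cᵢ² = Cᵢ·K = -1`, `Cᵢ·Cⱼ = 0` for `i ≠ j`, and `Cᵢ·f ≥ 0`. -/
def NonMinimalWitness (Pic : Type) [AddCommGroup Pic]
    (inter : Pic →ₗ[ℤ] Pic →ₗ[ℤ] ℤ) (G : Type) [Group G]
    (ρ : G →* Multiplicative (AddAut Pic)) (K f : Pic) : Prop :=
  ∃ l : ℕ, (l = 1 ∨ l = 2 ∨ l = 4) ∧ ∃ C : Fin l → Pic,
    (∀ g i, ∃ j, ρ g (C i) = C j) ∧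
    (∀ i j, ∃ g, ρ g (C i) = C j) ∧
    (∀ i, inter (C i) (C i) = -1) ∧
    (∀ i, inter (C i) K = -1) ∧
    (∀ i j, i ≠ j → inter (C i) (C j) = 0) ∧
    (∀ i, 0 ≤ inter (C i) f)

/-- Let `S` be a rational surface with a conic bundle `π : S → ℙ¹` having `k`
singular fibers (so `K² = 8 - k`, `K·f = -2`, `f² = 0`, where `f` is the fiber
class), and `G ⊂ Aut(S, π)` a group of order `2` or `4` acting trivially on the
base and such that `Pic(S)^G` has rank `2`, i.e. equals `ℤ·K_S ⊕ ℤ·f`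
(hypothesis `hrank`).  The action of `G` on `Pic(S)` is recorded by
`ρ : G →* AddAut Pic`, preserving the intersection form and fixing `K` and `f`.
If there exists a `G`-orbit of `l` pairwise disjoint `(-1)`-curves with
`l ∈ {1,2,4}`, then `k ∈ {2,3,5}`.  In particular, if `k = 4` or `k ≥ 6`,
the pair `(G, S)` is minimal (no such orbit exists, so no `G`-equivariant
birational contraction is possible). -/
theorem stmt_7 (Pic : Type) [AddCommGroup Pic]
    (inter : Pic →ₗ[ℤ] Pic →ₗ[ℤ] ℤ)
    (hsymm : ∀ x y, inter x y = inter y x)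
    (K f : Pic) (k : ℕ)
    (hKK : inter K K = 8 - (k : ℤ)) (hKf : inter K f = -2)
    (hff : inter f f = 0)
    (G : Type) [Group G] (hG : Nat.card G = 2 ∨ Nat.card G = 4)
    (ρ : G →* Multiplicative (AddAut Pic))
    (hρ : ∀ g x y, inter (ρ g x) (ρ g y) = inter x y)
    (hρK : ∀ g, ρ g K = K) (hρf : ∀ g, ρ g f = f)
    (hrank : ∀ x : Pic, (∀ g, ρ g x = x) → ∃ a b : ℤ, x = a • K + b • f) :
    (NonMinimalWitness Pic inter G ρ K f → k = 2 ∨ k = 3 ∨ k = 5) ∧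
    ((k = 4 ∨ 6 ≤ k) → ¬ NonMinimalWitness Pic inter G ρ K f) := by

  have main : NonMinimalWitness Pic inter G ρ K f → k = 2 ∨ k = 3 ∨ k = 5 := by
    rintro ⟨l, hl, C, hperm, -, hCC, hCK, hdisj, hCf⟩
    have hl1 : 1 ≤ l := by rcases hl with rfl|rfl|rfl <;> norm_num
    have hCinj : Function.Injective C := by
      intro i j h
      by_contra hne
      have h0 := hdisj i j hne
      rw [h, hCC j] at h0
      norm_num at h0
    set D := ∑ i, C i with hDdef
    have hDinv : ∀ g, ρ g D = D := by
      intro g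
      set σ : Fin l → Fin l := fun i => (hperm g i).choose with hσdef
      have hσ : ∀ i, ρ g (C i) = C (σ i) := fun i => (hperm g i).choose_spec
      have hinj : Function.Injective σ := by
        intro i j h
        apply hCinj
        apply (Multiplicative.toAdd (ρ g)).injective
        rw [hσ i, hσ j, h]
      have hbij : Function.Bijective σ := Finite.injective_iff_bijective.mp hinj
      calc ρ g D = ∑ i, ρ g (C i) := map_sum _ _ _
        _ = ∑ i, C (σ i) := by exact Finset.sum_congr rfl fun i _ => hσ i
        _ = ∑ i, C i := Fintype.sum_bijective σ hbij _ _ (fun i => rfl)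
    obtain ⟨a, b, hab⟩ := hrank D hDinv
    have hsum : ∀ y, inter D y = ∑ i, inter (C i) y := by
      intro y
      rw [hDdef, map_sum, LinearMap.sum_apply]
    have hsum2 : ∀ x, inter x D = ∑ j, inter x (C j) := by
      intro x
      rw [hDdef]
      exact map_sum (inter x) C Finset.univ
    have hDK : inter D K = -(l : ℤ) := by
      rw [hsum]
      simp [hCK]
    have hDf : 0 ≤ inter D f := by
      rw [hsum]
      exact Finset.sum_nonneg fun i _ => hCf i
    have hCD : ∀ i, inter (C i) D = -1 := by
      intro i
      rw [hsum2]
      rw [Finset.sum_eq_single i (fun j _ hj => hdisj i j hj.symm) (by simp)]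
      exact hCC i
    have hDD : inter D D = -(l : ℤ) := by
      rw [hsum]
      simp [hCD]
    -- expand using D = a•K + b•f
    have efK : inter f K = -2 := by rw [hsymm]; exact hKf
    have E1 : a * (8 - (k:ℤ)) - 2 * b = -(l:ℤ) := by
      rw [hab] at hDK
      simp only [map_add, map_smul, LinearMap.add_apply, LinearMap.smul_apply,
        smul_eq_mul, hKK, efK] at hDK
      linarith
    have E3 : 0 ≤ -2 * a := by
      rw [hab] at hDf
      simp only [map_add, map_smul, LinearMap.add_apply, LinearMap.smul_apply,
        smul_eq_mul, hKf, hff] at hDf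
      linarith
    have E2 : a * a * (8 - (k:ℤ)) - 4 * a * b = -(l:ℤ) := by
      rw [hab] at hDD
      simp only [map_add, map_smul, LinearMap.add_apply, LinearMap.smul_apply,
        smul_eq_mul, hKK, hKf, hff, efK] at hDD
      linarith
    have key : a * a * (8 - (k:ℤ)) = (l:ℤ) * (1 - 2 * a) := by
      linear_combination 2 * a * E1 - E2
    have hl4 : (l:ℤ) ≤ 4 := by rcases hl with rfl|rfl|rfl <;> norm_num
    have hl1' : (1:ℤ) ≤ (l:ℤ) := by exact_mod_cast hl1
    have ha : a ≤ -1 := by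
      rcases lt_or_ge a 0 with h | h
      · omega
      · exfalso
        have ha0 : a = 0 := by omega
        rw [ha0] at key
        simp at key
        omega
    have hn : 1 ≤ 8 - (k:ℤ) := by
      by_contra hc
      push_neg at hc
      nlinarith [sq_nonneg a]
    have hbound : -9 ≤ a := by
      nlinarith [sq_nonneg (a + 9)]
    interval_cases a <;> rcases hl with rfl|rfl|rfl <;> omega
  exact ⟨main, fun hk hw => by have := main hw; omega⟩
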